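/- If (a_n) is a realizable sequence and h is a polynomial with non-negative integer coefficients, then the sequence (a_n^{h(n)})_{n≥1} is realizable. -/

import Mathlib

/-- A sequence `a : ℕ → ℕ` (indexed from 1) is realizable if there is a set `X`
and a map `T : X → X` such that for every `n ≥ 1` the set of points fixed by the
`n`-th iterate of `T` is finite with cardinality `a n`. -/
def IsRealizable (a : ℕ → ℕ) : Prop :=
  ∃ (X : Type) (T : X → X), ∀ n : ℕ, 1 ≤ n →
    {x : X | T^[n] x = x}.Finite ∧ {x : X | T^[n] x = x}.ncard = a n

/-- The Möbius-transformed sum `∑_{d ∣ n} μ(n/d) a_d`. -/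
def doldSum (a : ℕ → ℕ) (n : ℕ) : ℤ :=
  ∑ d ∈ n.divisors, (ArithmeticFunction.moebius (n / d) : ℤ) * (a d : ℤ)


abbrev cycSp (c : ℕ → ℕ) : Type := Σ n : ℕ, Fin (c n) × Fin n

def cycMap (c : ℕ → ℕ) : cycSp c → cycSp c :=
  fun x => ⟨x.1, x.2.1, ⟨(x.2.2.val + 1) % x.1, Nat.mod_lt _ x.2.2.pos⟩⟩

lemma cycMap_iterate (c : ℕ → ℕ) (m : ℕ) (x : cycSp c) :
    (cycMap c)^[m] x = ⟨x.1, x.2.1, ⟨(x.2.2.val + m) % x.1, Nat.mod_lt _ x.2.2.pos⟩⟩ := by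
  induction m with
  | zero => simp [Nat.mod_eq_of_lt x.2.2.isLt]
  | succ m ih =>
      rw [Function.iterate_succ_apply', ih]
      simp only [cycMap]
      have hv : ((x.2.2.val + m) % x.1 + 1) % x.1 = (x.2.2.val + (m + 1)) % x.1 := by
        rw [Nat.mod_add_mod, Nat.add_assoc]
      exact Sigma.ext rfl (heq_of_eq (Prod.ext rfl (Fin.ext hv)))

lemma cycMap_fixed_iff (c : ℕ → ℕ) (m : ℕ) (x : cycSp c) :
    (cycMap c)^[m] x = x ↔ x.1 ∣ m := by
  rw [cycMap_iterate]
  constructor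
  · intro h
    have h2 : (x.2.2.val + m) % x.1 = x.2.2.val := by
      have := congrArg (fun y : cycSp c => y.2.2.val) h
      simpa using this
    have hmod : x.2.2.val + m ≡ x.2.2.val + 0 [MOD x.1] := by
      unfold Nat.ModEq
      simpa [Nat.mod_eq_of_lt x.2.2.isLt] using h2
    have := Nat.ModEq.add_left_cancel' _ hmod
    exact (Nat.modEq_zero_iff_dvd).mp this
  · intro h
    obtain ⟨t, rfl⟩ := h
    exact Sigma.ext rfl (heq_of_eq (Prod.ext rfl (Fin.ext (by
      show (x.2.2.val + x.1 * t) % x.1 = x.2.2.val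
      rw [Nat.mul_comm, Nat.add_mul_mod_self_right]
      exact Nat.mod_eq_of_lt x.2.2.isLt))))

lemma realizable_of_counts (b c : ℕ → ℕ)
    (hbc : ∀ n, 1 ≤ n → b n = ∑ d ∈ n.divisors, d * c d) :
    IsRealizable b := by
  refine ⟨cycSp c, cycMap c, fun m hm => ?_⟩
  have hset : {x : cycSp c | (cycMap c)^[m] x = x}
      = ↑(Nat.divisors m |>.sigma (fun n => (Finset.univ : Finset (Fin (c n) × Fin n)))) := by
    ext x
    simp only [Set.mem_setOf_eq, Finset.mem_coe, Finset.mem_sigma, Finset.mem_univ, and_true]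
    rw [cycMap_fixed_iff c m]
    exact ⟨fun h => Nat.mem_divisors.mpr ⟨h, by omega⟩, fun h => (Nat.mem_divisors.mp h).1⟩
  rw [hset]
  refine ⟨Finset.finite_toSet _, ?_⟩
  rw [Set.ncard_coe_finset, Finset.card_sigma, hbc m hm]
  apply Finset.sum_congr rfl
  intro d _
  simp [Finset.card_univ, Nat.mul_comm]

lemma dvd_ncard_of_free {α : Type} (N : ℕ) (hN : 0 < N) :
    ∀ (k : ℕ) (σ : α → α) (S : Set α), S.Finite → S.ncard = k →
    (∀ x ∈ S, σ x ∈ S) →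
    (∀ x ∈ S, σ^[N] x = x) →
    (∀ x ∈ S, ∀ j, 0 < j → j < N → σ^[j] x ≠ x) →
    N ∣ S.ncard := by
  intro k
  induction k using Nat.strong_induction_on with
  | _ k IH =>
    intro σ S hfin hcard hmaps hper hfree
    rcases Set.eq_empty_or_nonempty S with rfl | ⟨x, hx⟩
    · simp
    · have hit : ∀ j, σ^[j] x ∈ S := by
        intro j; induction j with
        | zero => simpa using hx
        | succ j ih => rw [Function.iterate_succ_apply']; exact hmaps _ ih
      have key : ∀ i j, i < j → j < N → σ^[i] x ≠ σ^[j] x := by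
        intro i j hlt hj hij
        have h1 : σ^[N - j] (σ^[j] x) = x := by
          rw [← Function.iterate_add_apply, show N - j + j = N by omega]
          exact hper x hx
        have h2 : σ^[N - j + i] x = x := by
          rw [Function.iterate_add_apply, hij, h1]
        exact hfree x hx (N - j + i) (by omega) (by omega) h2
      have hinj : Set.InjOn (fun j => σ^[j] x) (Set.Iio N) := by
        intro i hi j hj hij
        simp only [Set.mem_Iio] at hi hj
        by_contra hne
        rcases Nat.lt_or_ge i j with h | h
        · exact key i j h hj hij
        · exact key j i (by omega) hi hij.symm
      set O : Set α := (fun j => σ^[j] x) '' (Set.Iio N) with hO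
      have hOfin : O.Finite := (Set.finite_Iio N).image _
      have hOcard : O.ncard = N := by
        rw [hO, Set.ncard_image_of_injOn hinj,
          show (Set.Iio N) = ↑(Finset.range N) from by ext; simp,
          Set.ncard_coe_finset, Finset.card_range]
      have hOsub : O ⊆ S := by
        rintro y ⟨j, _, rfl⟩
        exact hit j
      set S' : Set α := S \ O with hS'
      have hS'fin : S'.Finite := hfin.diff (t := O)
      have hsum : S'.ncard + N = S.ncard := by
        rw [hS', ← hOcard]
        exact Set.ncard_diff_add_ncard_of_subset hOsub hfin
      have hinv : ∀ y ∈ S, y = σ^[N - 1] (σ y) := by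
        intro y hy
        have h := Function.iterate_succ_apply σ (N-1) y
        rw [Nat.succ_eq_add_one, show N - 1 + 1 = N by omega] at h
        rw [← h]
        exact (hper y hy).symm
      have hmaps' : ∀ y ∈ S', σ y ∈ S' := by
        rintro y ⟨hyS, hyO⟩
        refine ⟨hmaps y hyS, fun hcon => hyO ?_⟩
        obtain ⟨j, hj, hjx⟩ := hcon
        simp only [Set.mem_Iio] at hj
        simp only [Function.iterate_zero, id] at hjx
        rcases Nat.eq_zero_or_pos j with rfl | hjpos
        · refine ⟨N - 1, Set.mem_Iio.mpr (by omega), ?_⟩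
          simp only [Function.iterate_zero, id_eq] at hjx
          show σ^[N-1] x = y
          rw [hjx]
          exact (hinv y hyS).symm
        · refine ⟨j - 1, Set.mem_Iio.mpr (by omega), ?_⟩
          show σ^[j-1] x = y
          have h2 : σ (σ^[j-1] x) = σ y := by
            have h3 := (Function.iterate_succ_apply' σ (j-1) x).symm
            rw [Nat.succ_eq_add_one, show j - 1 + 1 = j by omega] at h3
            rw [← hjx]
            exact h3
          have e1 := hinv _ (hit (j-1))
          rw [h2] at e1
          rw [e1]
          exact (hinv y hyS).symm
      have hlt : S'.ncard < k := by omega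
      obtain ⟨t, ht⟩ := IH S'.ncard hlt σ S' hS'fin rfl hmaps'
        (fun y hy => hper y hy.1) (fun y hy => hfree y hy.1)
      exact ⟨t + 1, by rw [← hsum, ht]; ring⟩



-- arithmetic helper: if g ∣ m, p prime divides m, and p^(v_p m) ∤ g then g ∣ m / p
lemma dvd_div_prime {p m g : ℕ} (hp : p.Prime) (hm : m ≠ 0) (hg : g ∣ m) (hgm : g ≠ 0)
    (hv : ¬ p ^ (m.factorization p) ∣ g) : g ∣ m / p := by
  have hpm : p ∣ m := by
    by_contra hpm
    have : m.factorization p = 0 := Nat.factorization_eq_zero_of_not_dvd hpm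
    rw [this, pow_zero] at hv
    exact hv (one_dvd _)
  have hdivne : m / p ≠ 0 := by
    have := Nat.div_pos (Nat.le_of_dvd (Nat.pos_of_ne_zero hm) hpm) hp.pos
    omega
  rw [← Nat.factorization_le_iff_dvd hgm hdivne]
  have hle := (Nat.factorization_le_iff_dvd hgm hm).mpr hg
  rw [Nat.factorization_div hpm, hp.factorization]
  intro q
  rw [Finsupp.tsub_apply, Finsupp.single_apply]
  by_cases hq : p = q
  · subst hq
    have : ¬ (m.factorization p ≤ g.factorization p) := by
      intro hle2
      exact hv ((Nat.Prime.pow_dvd_iff_le_factorization hp hgm).mpr hle2)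
    have h2 : g.factorization p < m.factorization p := Nat.lt_of_not_le this
    simp only [reduceIte]
    omega
  · simp only [if_neg hq]
    simpa using hle q

lemma fix_subset_of_dvd {X : Type} (T : X → X) {u v : ℕ} (huv : u ∣ v) :
    {x : X | T^[u] x = x} ⊆ {x : X | T^[v] x = x} := by
  intro x hx
  exact Function.IsPeriodicPt.trans_dvd hx huv

lemma gauss_cong {X : Type} (T : X → X) {p m : ℕ} (hp : p.Prime) (hpm : p ∣ m) (hm : 1 ≤ m)
    (hfin : {x : X | T^[m] x = x}.Finite) :
    p ^ (m.factorization p) ∣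
      ({x : X | T^[m] x = x} \ {x : X | T^[m/p] x = x}).ncard := by
  set k := m.factorization p with hk
  set N := p ^ k with hNdef
  set c := m / N with hcdef
  have hm0 : m ≠ 0 := by omega
  have hNc : N * c = m := Nat.ordProj_mul_ordCompl_eq_self m p
  have hpc : ¬ p ∣ c := Nat.not_dvd_ordCompl hp hm0
  have hN0 : 0 < N := pow_pos hp.pos k
  have hc0 : 0 < c := by
    rcases Nat.eq_zero_or_pos c with h | h
    · rw [h, Nat.mul_zero] at hNc; omega
    · exact h
  have hcm : c ∣ m := ⟨N, by rw [← hNc]; ring⟩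
  have hclem : c ≤ m := Nat.le_of_dvd (by omega) hcm
  set S := {x : X | T^[m] x = x} \ {x : X | T^[m/p] x = x} with hS
  -- injectivity helper on Fix(T^m)
  have hinvfix : ∀ y : X, T^[m] y = y → T^[m - c] (T^[c] y) = y := by
    intro y hy
    rw [← Function.iterate_add_apply, show m - c + c = m by omega, hy]
  have hcomm : ∀ (u : ℕ) (y : X), T^[m] y = y → T^[m] (T^[u] y) = T^[u] y := by
    intro u y hy
    rw [← Function.iterate_add_apply, Nat.add_comm, Function.iterate_add_apply, hy]
  apply dvd_ncard_of_free N hN0 S.ncard (T^[c]) S (hfin.subset Set.diff_subset) rfl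
  · -- maps into S
    rintro x ⟨hx1, hx2⟩
    refine ⟨hcomm c x hx1, fun hcon => hx2 ?_⟩
    have hq : T^[c] (T^[m/p] x) = T^[c] x := by
      rw [← Function.iterate_add_apply, Nat.add_comm, Function.iterate_add_apply]
      exact hcon
    have hmem : T^[m] (T^[m/p] x) = T^[m/p] x := by
      rw [← Function.iterate_add_apply, Nat.add_comm, Function.iterate_add_apply, hx1]
    have := congrArg (T^[m - c]) hq
    rw [hinvfix _ hmem, hinvfix _ hx1] at this
    exact this
  · -- periodicity
    rintro x ⟨hx1, _⟩
    show (T^[c])^[N] x = x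
    rw [← Function.iterate_mul, Nat.mul_comm, hNc]
    exact hx1
  · -- freeness
    rintro x ⟨hx1, hx2⟩ j hj0 hjN hcon
    have h1 : Function.IsPeriodicPt T (c * j) x := by
      show T^[c * j] x = x
      rw [Function.iterate_mul]
      exact hcon
    have h2 : Function.IsPeriodicPt T m x := hx1
    have hg := h2.gcd h1
    set g := Nat.gcd m (c * j) with hgdef
    have hgm : g ∣ m := Nat.gcd_dvd_left _ _
    have hg0 : g ≠ 0 := by
      have := Nat.gcd_pos_of_pos_left (c * j) (show 0 < m by omega)
      omega
    have hcop : Nat.Coprime N c := Nat.Coprime.pow_left k (hp.coprime_iff_not_dvd.mpr hpc)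
    have hNcj : ¬ N ∣ c * j := by
      intro hd
      have hNj : N ∣ j := hcop.dvd_of_dvd_mul_left hd
      have := Nat.le_of_dvd hj0 hNj
      omega
    have hNg : ¬ N ∣ g := fun hd => hNcj (hd.trans (Nat.gcd_dvd_right _ _))
    have hgdiv : g ∣ m / p := dvd_div_prime hp hm0 hgm hg0 hNg
    exact hx2 (hg.trans_dvd hgdiv)

open Polynomial

lemma eval_mono (h : Polynomial ℕ) {m n : ℕ} (hmn : m ≤ n) : h.eval m ≤ h.eval n := by
  rw [eval_eq_sum_range, eval_eq_sum_range]
  exact Finset.sum_le_sum fun i _ => Nat.mul_le_mul_left _ (Nat.pow_le_pow_left hmn i)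

lemma eval_strict_mono (h : Polynomial ℕ) (hd : 1 ≤ h.natDegree) {m n : ℕ} (hmn : m < n) :
    h.eval m < h.eval n := by
  rw [eval_eq_sum_range, eval_eq_sum_range]
  refine Finset.sum_lt_sum (fun i _ => Nat.mul_le_mul_left _ (Nat.pow_le_pow_left hmn.le i)) ?_
  refine ⟨h.natDegree, Finset.mem_range.mpr (by omega), ?_⟩
  have hc : 0 < h.coeff h.natDegree := by
    have hne : h ≠ 0 := fun hh => by simp [hh] at hd
    have h2 : h.leadingCoeff ≠ 0 := Polynomial.leadingCoeff_ne_zero.mpr hne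
    rw [Polynomial.leadingCoeff] at h2
    exact Nat.pos_of_ne_zero h2
  exact mul_lt_mul_of_pos_left (Nat.pow_lt_pow_left hmn (by omega)) hc

lemma eval_lower (h : Polynomial ℕ) (hd : 1 ≤ h.natDegree) {n : ℕ} (hn : 1 ≤ n) :
    n ≤ h.eval n := by
  rw [eval_eq_sum_range]
  have hc : 0 < h.coeff h.natDegree := by
    have hne : h ≠ 0 := fun hh => by simp [hh] at hd
    have h2 : h.leadingCoeff ≠ 0 := Polynomial.leadingCoeff_ne_zero.mpr hne
    rw [Polynomial.leadingCoeff] at h2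
    exact Nat.pos_of_ne_zero h2
  calc n ≤ h.coeff h.natDegree * n ^ h.natDegree := by
        have h1 : n ≤ n ^ h.natDegree := by
          calc n = n ^ 1 := (pow_one n).symm
            _ ≤ n ^ h.natDegree := Nat.pow_le_pow_right hn hd
        calc n ≤ n ^ h.natDegree := h1
          _ ≤ h.coeff h.natDegree * n ^ h.natDegree := Nat.le_mul_of_pos_left _ hc
    _ ≤ _ := Finset.single_le_sum (f := fun i => h.coeff i * n ^ i)
        (fun i _ => Nat.zero_le _) (Finset.mem_range.mpr (by omega))

lemma eval_sub_dvd (h : Polynomial ℕ) {m n : ℕ} (hmn : m ≤ n) :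
    (n - m) ∣ (h.eval n - h.eval m) := by
  have hz := Polynomial.sub_dvd_eval_sub (R := ℤ) (n : ℤ) (m : ℤ) (Polynomial.map (Nat.castRingHom ℤ) h)
  rw [Polynomial.eval_natCast_map, Polynomial.eval_natCast_map] at hz
  have h1 : ((n - m : ℕ) : ℤ) = (n : ℤ) - m := by
    rw [Nat.cast_sub hmn]
  have h2 : ((h.eval n - h.eval m : ℕ) : ℤ) = ((h.eval n : ℕ) : ℤ) - ((h.eval m : ℕ) : ℤ) := by
    rw [Nat.cast_sub (eval_mono h hmn)]
  rw [← Int.natCast_dvd_natCast, h1, h2]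
  simpa using hz

lemma eval_gap (h : Polynomial ℕ) (hd : 1 ≤ h.natDegree) {m n : ℕ} (hmn : m < n) :
    n - m ≤ h.eval n - h.eval m :=
  Nat.le_of_dvd (by have := eval_strict_mono h hd hmn; omega) (eval_sub_dvd h hmn.le)

lemma pow_gauss_lift {p k x y H H' : ℕ} (hp : p.Prime) (hk : 1 ≤ k)
    (hxy : x ≡ y [MOD p ^ k]) (hH : H' ≤ H) (hkH : k ≤ H')
    (hphi : p ^ (k-1) * (p - 1) ∣ H - H') :
    x ^ H ≡ y ^ H' [MOD p ^ k] := by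
  by_cases hpy : p ∣ y
  · have hpx : p ∣ x := by
      have h1 : x ≡ y [MOD p] := Nat.ModEq.of_dvd (dvd_pow_self p (by omega)) hxy
      have h2 : y ≡ 0 [MOD p] := Nat.modEq_zero_iff_dvd.mpr hpy
      exact Nat.modEq_zero_iff_dvd.mp (h1.trans h2)
    have d1 : p ^ k ∣ x ^ H :=
      dvd_trans (pow_dvd_pow_of_dvd hpx k) (pow_dvd_pow x (le_trans hkH hH))
    have d2 : p ^ k ∣ y ^ H' :=
      dvd_trans (pow_dvd_pow_of_dvd hpy k) (pow_dvd_pow y hkH)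
    exact (Nat.modEq_zero_iff_dvd.mpr d1).trans (Nat.modEq_zero_iff_dvd.mpr d2).symm
  · have hpx : ¬ p ∣ x := by
      intro hpx
      have h1 : x ≡ y [MOD p] := Nat.ModEq.of_dvd (dvd_pow_self p (by omega)) hxy
      have h2 : x ≡ 0 [MOD p] := Nat.modEq_zero_iff_dvd.mpr hpx
      exact hpy (Nat.modEq_zero_iff_dvd.mp ((h2.symm.trans h1).symm))
    have hcop : Nat.Coprime y (p ^ k) :=
      Nat.Coprime.pow_right k ((Nat.coprime_comm).mp (hp.coprime_iff_not_dvd.mpr hpy))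
    have htot : Nat.totient (p ^ k) = p ^ (k-1) * (p - 1) := Nat.totient_prime_pow hp (by omega)
    obtain ⟨t, ht⟩ := hphi
    have heuler : y ^ (H - H') ≡ 1 [MOD p ^ k] := by
      rw [ht, ← htot, pow_mul]
      calc (y ^ Nat.totient (p^k)) ^ t ≡ 1 ^ t [MOD p ^ k] :=
            Nat.ModEq.pow t (Nat.ModEq.pow_totient hcop)
        _ = 1 := one_pow t
    calc x ^ H ≡ y ^ H [MOD p ^ k] := hxy.pow H
      _ = y ^ H' * y ^ (H - H') := by rw [← pow_add]; congr 1; omega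
      _ ≡ y ^ H' * 1 [MOD p ^ k] := Nat.ModEq.mul_left _ heuler
      _ = y ^ H' := by ring
lemma realizable_mul {a b : ℕ → ℕ} (ha : IsRealizable a) (hb : IsRealizable b) :
    IsRealizable (fun n => a n * b n) := by
  obtain ⟨X, T, hT⟩ := ha
  obtain ⟨Y, S, hS⟩ := hb
  refine ⟨X × Y, Prod.map T S, fun n hn => ?_⟩
  have hset : {p : X × Y | (Prod.map T S)^[n] p = p}
      = {x : X | T^[n] x = x} ×ˢ {y : Y | S^[n] y = y} := by
    ext ⟨x, y⟩
    simp [Prod.map_iterate, Prod.ext_iff]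
  rw [hset]
  refine ⟨((hT n hn).1).prod ((hS n hn).1), ?_⟩
  rw [← Nat.card_coe_set_eq, Nat.card_congr (Equiv.Set.prod _ _), Nat.card_prod,
    Nat.card_coe_set_eq, Nat.card_coe_set_eq, (hT n hn).2, (hS n hn).2]

lemma realizable_const_pow {a : ℕ → ℕ} (ha : IsRealizable a) (c : ℕ) :
    IsRealizable (fun n => a n ^ c) := by
  obtain ⟨X, T, hT⟩ := ha
  refine ⟨Fin c → X, fun f => T ∘ f, fun n hn => ?_⟩
  have hiter : ∀ (m : ℕ) (f : Fin c → X), (fun f => T ∘ f)^[m] f = T^[m] ∘ f := by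
    intro m
    induction m with
    | zero => intro f; rfl
    | succ m ih =>
        intro f
        rw [Function.iterate_succ_apply', ih, Function.iterate_succ']
        rfl
  have hset : {f : Fin c → X | (fun f => T ∘ f)^[n] f = f}
      = {f : Fin c → X | ∀ i, f i ∈ {x : X | T^[n] x = x}} := by
    ext f
    simp only [Set.mem_setOf_eq, hiter n f]
    constructor
    · intro hf i; exact congrFun hf i
    · intro hf; funext i; exact hf i
  rw [hset]
  set F := {x : X | T^[n] x = x}
  have hFfin : F.Finite := (hT n hn).1
  have e : {f : Fin c → X | ∀ i, f i ∈ F} ≃ (Fin c → F) :=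
    { toFun := fun f => fun i => ⟨f.1 i, f.2 i⟩
      invFun := fun g => ⟨fun i => (g i).1, fun i => (g i).2⟩
      left_inv := fun f => rfl
      right_inv := fun g => rfl }
  have hfin : {f : Fin c → X | ∀ i, f i ∈ F}.Finite := by
    haveI : Finite F := hFfin
    haveI : Finite (Fin c → F) := Pi.finite
    rw [← Set.finite_coe_iff]
    exact Finite.of_equiv _ e.symm
  refine ⟨hfin, ?_⟩
  haveI : Finite F := hFfin
  rw [← Nat.card_coe_set_eq, Nat.card_congr e, Nat.card_fun, Nat.card_coe_set_eq,
    (hT n hn).2, Nat.card_eq_fintype_card, Fintype.card_fin]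

open ArithmeticFunction in
lemma realizable_nonconst_pow (a : ℕ → ℕ) (ha : IsRealizable a) (h : Polynomial ℕ)
    (hd : 1 ≤ h.natDegree) : IsRealizable (fun n => a n ^ h.eval n) := by
  classical
  obtain ⟨X, T, hT⟩ := ha
  set b : ℕ → ℕ := fun n => a n ^ h.eval n with hbdef
  have amono : ∀ {d n : ℕ}, d ∣ n → 1 ≤ n → a d ≤ a n := by
    intro d n hdn hn
    have hd1 : 1 ≤ d := Nat.pos_of_dvd_of_pos hdn hn
    rw [← (hT d hd1).2, ← (hT n hn).2]
    exact Set.ncard_le_ncard (fix_subset_of_dvd T hdn) (hT n hn).1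
  have bmono : ∀ {d n : ℕ}, d ∣ n → 1 ≤ n → b d ≤ b n := by
    intro d n hdn hn
    have hd1 : 1 ≤ d := Nat.pos_of_dvd_of_pos hdn hn
    calc b d = a d ^ h.eval d := rfl
      _ ≤ a n ^ h.eval d := Nat.pow_le_pow_left (amono hdn hn) _
      _ ≤ a n ^ h.eval n := by
          rcases Nat.eq_zero_or_pos (a n) with h0 | h1
          · rw [h0, Nat.zero_pow, Nat.zero_pow]
            · have := eval_lower h hd hn; omega
            · have := eval_lower h hd hd1; omega
          · exact Nat.pow_le_pow_right h1 (eval_mono h (Nat.le_of_dvd (by omega) hdn))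
  -- Gauss congruences for b
  have bgauss : ∀ p m : ℕ, p.Prime → p ∣ m → 1 ≤ m →
      b (m / p) ≡ b m [MOD p ^ (m.factorization p)] := by
    intro p m hp hpm hm
    have hm0 : m ≠ 0 := by omega
    have hk1 : 1 ≤ m.factorization p :=
      (hp.pow_dvd_iff_le_factorization hm0).mp (by simpa using hpm)
    set k := m.factorization p with hkdef
    have hsub : {x : X | T^[m/p] x = x} ⊆ {x : X | T^[m] x = x} :=
      fix_subset_of_dvd T (Nat.div_dvd_of_dvd hpm)
    have hmp1 : 1 ≤ m / p := Nat.div_pos (Nat.le_of_dvd (by omega) hpm) hp.pos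
    have hcard : ({x : X | T^[m] x = x} \ {x : X | T^[m/p] x = x}).ncard
        = a m - a (m/p) := by
      rw [Set.ncard_diff hsub ((hT m hm).1.subset hsub), (hT m hm).2, (hT (m/p) hmp1).2]
    have hag := gauss_cong T hp hpm hm (hT m hm).1
    rw [hcard] at hag
    have haga : a (m/p) ≡ a m [MOD p ^ k] :=
      (Nat.modEq_iff_dvd' (amono (Nat.div_dvd_of_dvd hpm) hm)).mpr hag
    have hpk_dvd : p ^ k ∣ m := Nat.ordProj_dvd m p
    have hmpk : p ^ (k-1) ∣ m / p := by
      rw [Nat.dvd_div_iff_mul_dvd hpm]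
      have he : p * p ^ (k-1) = p ^ k := by
        rw [← pow_succ']
        congr 1
        omega
      rw [he]
      exact hpk_dvd
    have hklepk : k ≤ p ^ (k-1) := by
      calc k ≤ 2 ^ (k-1) := by
            have := Nat.lt_two_pow_self (n := k-1)
            omega
        _ ≤ p ^ (k-1) := Nat.pow_le_pow_left hp.two_le _
    have hkH : k ≤ h.eval (m/p) :=
      le_trans (le_trans hklepk (Nat.le_of_dvd hmp1 hmpk)) (eval_lower h hd hmp1)
    have hphi : p ^ (k-1) * (p-1) ∣ h.eval m - h.eval (m/p) := by
      refine dvd_trans ?_ (eval_sub_dvd h (Nat.div_le_self m p))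
      have hmpm : m / p * p = m := Nat.div_mul_cancel hpm
      have hmm : m - m / p = (m/p) * (p - 1) := by
        have e1 : m/p * ((p-1)+1) = m/p * (p-1) + m/p := Nat.mul_succ _ _
        rw [show p - 1 + 1 = p from by have := hp.two_le; omega, hmpm] at e1
        omega
      rw [hmm]
      exact Nat.mul_dvd_mul hmpk dvd_rfl
    exact (pow_gauss_lift (x := a m) (y := a (m/p)) hp hk1 haga.symm
      (eval_mono h (Nat.div_le_self m p)) hkH hphi).symm
  -- prime-power divisibility of the Dold sums
  have hppdvd : ∀ n : ℕ, 1 ≤ n → ∀ p : ℕ, p.Prime → p ∣ n →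
      ((p ^ (n.factorization p) : ℕ) : ℤ) ∣ doldSum b n := by
    intro n hn p hp hpn
    have hn0 : n ≠ 0 := by omega
    have hk1 : 1 ≤ n.factorization p :=
      (hp.pow_dvd_iff_le_factorization hn0).mp (by simpa using hpn)
    set k := n.factorization p with hkdef
    set q := n / p ^ k with hqdef
    have hNq : p ^ k * q = n := Nat.ordProj_mul_ordCompl_eq_self n p
    have hpq : ¬ p ∣ q := Nat.not_dvd_ordCompl hp hn0
    have hq0 : q ≠ 0 := by
      intro h0
      rw [h0, Nat.mul_zero] at hNq
      omega
    have hrw : doldSum b n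
        = ∑ d ∈ n.divisors, (moebius d : ℤ) * (b (n/d) : ℤ) := by
      rw [← Nat.sum_div_divisors n (fun d => (moebius d : ℤ) * (b (n/d) : ℤ)), doldSum]
      apply Finset.sum_congr rfl
      intro d hdm
      rw [Nat.div_div_self (Nat.mem_divisors.mp hdm).1 hn0]
    have hsplit : n.divisors =
        (q.divisors ∪ q.divisors.image (p * ·)) ∪
          n.divisors.filter (fun d => p * p ∣ d) := by
      ext d
      simp only [Finset.mem_union, Finset.mem_image, Finset.mem_filter, Nat.mem_divisors]
      constructor
      · rintro ⟨hdn, -⟩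
        by_cases h1 : p ∣ d
        · by_cases h2 : p * p ∣ d
          · exact Or.inr ⟨⟨hdn, hn0⟩, h2⟩
          · obtain ⟨e, rfl⟩ := h1
            refine Or.inl (Or.inr ⟨e, ⟨?_, hq0⟩, rfl⟩)
            have hpe : ¬ p ∣ e := fun hc => h2 (Nat.mul_dvd_mul_left p hc)
            have hen : e ∣ n := dvd_trans (Dvd.intro_left p rfl) hdn
            have hcop : Nat.Coprime e (p^k) :=
              (Nat.Coprime.pow_right _ ((hp.coprime_iff_not_dvd.mpr hpe).symm))
            rw [← hNq] at hen
            exact hcop.dvd_of_dvd_mul_left hen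
        · refine Or.inl (Or.inl ⟨?_, hq0⟩)
          have hcop : Nat.Coprime d (p^k) :=
            (Nat.Coprime.pow_right _ ((hp.coprime_iff_not_dvd.mpr h1).symm))
          rw [← hNq] at hdn
          exact hcop.dvd_of_dvd_mul_left hdn
      · rintro ((⟨hdq, -⟩ | ⟨e, ⟨he, -⟩, rfl⟩) | ⟨⟨hdn, -⟩, -⟩)
        · exact ⟨dvd_trans hdq ⟨p^k, by rw [← hNq]; ring⟩, hn0⟩
        · refine ⟨?_, hn0⟩
          rw [← hNq]
          exact Nat.mul_dvd_mul (dvd_pow_self p (by omega)) he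
        · exact ⟨hdn, hn0⟩
    have hdisj1 : Disjoint q.divisors (q.divisors.image (p * ·)) := by
      rw [Finset.disjoint_left]
      intro d hd1 hd2
      obtain ⟨e, -, rfl⟩ := Finset.mem_image.mp hd2
      exact hpq (dvd_trans (Dvd.intro e rfl) (Nat.mem_divisors.mp hd1).1)
    have hdisj2 : Disjoint (q.divisors ∪ q.divisors.image (p * ·))
        (n.divisors.filter (fun d => p * p ∣ d)) := by
      rw [Finset.disjoint_left]
      intro d hd1 hd2
      have hpp : p * p ∣ d := (Finset.mem_filter.mp hd2).2
      rcases Finset.mem_union.mp hd1 with hb1 | hb1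
      · exact hpq (dvd_trans (dvd_trans (Dvd.intro p rfl) hpp)
          (Nat.mem_divisors.mp hb1).1)
      · obtain ⟨e, he, rfl⟩ := Finset.mem_image.mp hb1
        have : p ∣ e := (Nat.mul_dvd_mul_iff_left hp.pos).mp hpp
        exact hpq (dvd_trans this (Nat.mem_divisors.mp he).1)
    rw [hrw, hsplit, Finset.sum_union hdisj2, Finset.sum_union hdisj1]
    have hzero : ∑ d ∈ n.divisors.filter (fun d => p * p ∣ d),
        (moebius d : ℤ) * (b (n/d) : ℤ) = 0 := by
      apply Finset.sum_eq_zero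
      intro d hdm
      have hpp : p * p ∣ d := (Finset.mem_filter.mp hdm).2
      have hnsq : ¬ Squarefree d := by
        intro hsq
        exact hp.one_lt.ne' (Nat.isUnit_iff.mp (hsq p hpp))
      rw [moebius_eq_zero_of_not_squarefree hnsq]
      simp
    rw [hzero, add_zero, Finset.sum_image (fun x _ y _ hxy =>
      Nat.eq_of_mul_eq_mul_left hp.pos hxy)]
    have hterm : ∀ e ∈ q.divisors,
        (moebius e : ℤ) * (b (n/e) : ℤ) + (moebius (p * e) : ℤ) * (b (n/(p*e)) : ℤ)
          = (moebius e : ℤ) * ((b (n/e) : ℤ) - (b (n/(p*e)) : ℤ)) := by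
      intro e hem
      have hpe : ¬ p ∣ e := fun hc => hpq (dvd_trans hc (Nat.mem_divisors.mp hem).1)
      have hcop : Nat.Coprime p e := hp.coprime_iff_not_dvd.mpr hpe
      have : moebius (p * e) = moebius p * moebius e :=
        isMultiplicative_moebius.map_mul_of_coprime hcop
      rw [this, moebius_apply_prime hp]
      push_cast
      ring
    rw [← Finset.sum_add_distrib, Finset.sum_congr rfl hterm]
    apply Finset.dvd_sum
    intro e hem
    have heq : e ∣ q := (Nat.mem_divisors.mp hem).1
    have he1 : 1 ≤ e := Nat.pos_of_mem_divisors hem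
    set m := n / e with hmdef
    have hqe : m = p ^ k * (q / e) := by
      rw [hmdef, ← hNq, Nat.mul_div_assoc _ heq]
    have hqe0 : q / e ≠ 0 := by
      intro h0
      rw [h0, Nat.mul_zero] at hqe
      have : e ∣ n := dvd_trans heq ⟨p^k, by rw [← hNq]; ring⟩
      have := Nat.div_pos (Nat.le_of_dvd (by omega) this) (by omega)
      omega
    have hm1 : 1 ≤ m := by
      rw [hqe]
      exact Nat.one_le_iff_ne_zero.mpr (Nat.mul_ne_zero (pow_ne_zero _ hp.pos.ne') hqe0)
    have hpkm : p ^ k ∣ m := by rw [hqe]; exact Dvd.intro _ rfl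
    have hpm : p ∣ m := dvd_trans (dvd_pow_self p (by omega)) hpkm
    have hkK : k ≤ m.factorization p :=
      (hp.pow_dvd_iff_le_factorization (by omega)).mp hpkm
    have hbg := bgauss p m hp hpm hm1
    have hbg2 : b (m/p) ≡ b m [MOD p ^ k] :=
      Nat.ModEq.of_dvd (pow_dvd_pow p hkK) hbg
    have hble : b (m/p) ≤ b m := bmono (Nat.div_dvd_of_dvd hpm) hm1
    have hdvdnat : p ^ k ∣ b m - b (m/p) := (Nat.modEq_iff_dvd' hble).mp hbg2
    have hcast : ((b m - b (m/p) : ℕ) : ℤ) = (b m : ℤ) - (b (m/p) : ℤ) :=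
      Nat.cast_sub hble
    have hnpe : n / (p * e) = m / p := by
      rw [hmdef, Nat.div_div_eq_div_mul, Nat.mul_comm p e]
    rw [hnpe]
    refine Dvd.dvd.mul_left ?_ _
    rw [← hcast]
    exact Int.natCast_dvd_natCast.mpr hdvdnat
  -- sign of the Dold sums
  have hsign : ∀ n, 1 ≤ n → 0 ≤ doldSum b n := by
    intro n hn
    have hn0 : n ≠ 0 := by omega
    rcases eq_or_lt_of_le hn with h1 | h1
    · rw [← h1]
      rw [doldSum]
      simp [Nat.divisors_one]
    · have hn2 : 2 ≤ n := h1
      rcases Nat.lt_or_ge (a n) 2 with ha2 | ha2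
      · interval_cases han : (a n)
        · -- a n = 0
          rw [doldSum]
          apply le_of_eq
          symm
          apply Finset.sum_eq_zero
          intro d hdm
          have hd1 : 1 ≤ d := Nat.pos_of_mem_divisors hdm
          have : a d = 0 := by
            have := amono (Nat.mem_divisors.mp hdm).1 hn
            omega
          have : b d = 0 := by
            rw [hbdef]
            simp only
            rw [this, Nat.zero_pow]
            have := eval_lower h hd hd1
            omega
          rw [this]
          simp
        · -- a n = 1
          obtain ⟨x0, hx0⟩ := Set.ncard_eq_one.mp ((hT n hn).2.trans han)
          have hx0mem : T^[n] x0 = x0 := by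
            have : x0 ∈ {x : X | T^[n] x = x} := hx0 ▸ rfl
            exact this
          have hTx0 : T x0 = x0 := by
            have hmem : T x0 ∈ {x : X | T^[n] x = x} := by
              show T^[n] (T x0) = T x0
              rw [← Function.iterate_succ_apply, Function.iterate_succ_apply', hx0mem]
            rw [hx0] at hmem
            exact hmem
          have had : ∀ d, 1 ≤ d → d ∣ n → a d = 1 := by
            intro d hd1 hdn
            have hle : a d ≤ 1 := han ▸ amono hdn hn
            have hge : 1 ≤ a d := by
              rw [← (hT d hd1).2]
              exact (Set.ncard_pos ((hT d hd1).1)).mpr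
                ⟨x0, Function.IsFixedPt.iterate hTx0 d⟩
            omega
          have hbd : ∀ d ∈ n.divisors, (moebius (n/d) : ℤ) * (b d : ℤ)
              = (moebius (n/d) : ℤ) := by
            intro d hdm
            have hd1 : 1 ≤ d := Nat.pos_of_mem_divisors hdm
            have : b d = 1 := by
              rw [hbdef]
              simp only
              rw [had d hd1 (Nat.mem_divisors.mp hdm).1, one_pow]
            rw [this]
            simp
          rw [doldSum, Finset.sum_congr rfl hbd]
          have : ∑ d ∈ n.divisors, (moebius (n/d) : ℤ)
              = ∑ d ∈ n.divisors, (moebius d : ℤ) :=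
            Nat.sum_div_divisors n (fun d => (moebius d : ℤ))
          rw [this]
          have hz : ∑ d ∈ n.divisors, (moebius d : ℤ)
              = (moebius * (ArithmeticFunction.zeta : ArithmeticFunction ℤ)) n := by
            rw [ArithmeticFunction.coe_mul_zeta_apply]
          rw [hz, ArithmeticFunction.moebius_mul_coe_zeta, ArithmeticFunction.one_apply_ne (by omega)]
      · -- a n ≥ 2
        have hkey : ∑ d ∈ n.divisors.erase n, b d ≤ b n := by
          have hcard : (n.divisors.erase n).card ≤ n / 2 := by
            have hsub : n.divisors.erase n ⊆ Finset.Icc 1 (n/2) := by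
              intro d hdm
              have hdn : d ∣ n := (Nat.mem_divisors.mp (Finset.mem_of_mem_erase hdm)).1
              have hne : d ≠ n := Finset.ne_of_mem_erase hdm
              obtain ⟨t, rfl⟩ := hdn
              have hd1 : 1 ≤ d := Nat.pos_of_mem_divisors (Finset.mem_of_mem_erase hdm)
              have ht2 : 2 ≤ t := by
                rcases Nat.lt_or_ge t 2 with ht | ht
                · interval_cases t
                  · omega
                  · exact absurd (mul_one d).symm hne
                · exact ht
              refine Finset.mem_Icc.mpr ⟨hd1, ?_⟩
              rw [Nat.le_div_iff_mul_le (by omega)]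
              nlinarith
            calc (n.divisors.erase n).card ≤ (Finset.Icc 1 (n/2)).card :=
                  Finset.card_le_card hsub
              _ = n / 2 := by rw [Nat.card_Icc]; omega
          have hbound : ∀ d ∈ n.divisors.erase n, b d ≤ a n ^ h.eval (n/2) := by
            intro d hdm
            have hdn : d ∣ n := (Nat.mem_divisors.mp (Finset.mem_of_mem_erase hdm)).1
            have hne : d ≠ n := Finset.ne_of_mem_erase hdm
            have hd1 : 1 ≤ d := Nat.pos_of_mem_divisors (Finset.mem_of_mem_erase hdm)
            have hdle : d ≤ n / 2 := by
              obtain ⟨t, rfl⟩ := hdn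
              have ht2 : 2 ≤ t := by
                rcases Nat.lt_or_ge t 2 with ht | ht
                · interval_cases t
                  · omega
                  · exact absurd (mul_one d).symm hne
                · exact ht
              rw [Nat.le_div_iff_mul_le (by omega)]
              nlinarith
            calc b d = a d ^ h.eval d := rfl
              _ ≤ a n ^ h.eval d := Nat.pow_le_pow_left (amono hdn hn) _
              _ ≤ a n ^ h.eval (n/2) :=
                  Nat.pow_le_pow_right (by omega) (eval_mono h hdle)
          calc ∑ d ∈ n.divisors.erase n, b d
              ≤ (n.divisors.erase n).card * (a n ^ h.eval (n/2)) := by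
                rw [← smul_eq_mul]
                exact Finset.sum_le_card_nsmul _ _ _ hbound
            _ ≤ (n / 2) * (a n ^ h.eval (n/2)) :=
                Nat.mul_le_mul_right _ hcard
            _ ≤ b n := by
                have hgap : h.eval (n/2) + (n - n/2) ≤ h.eval n := by
                  have h1 := eval_gap h hd (show n/2 < n by omega)
                  have h2 := eval_mono h (show n/2 ≤ n by omega)
                  omega
                have hb1 : a n ^ h.eval n ≥ a n ^ (h.eval (n/2) + (n - n/2)) :=
                  Nat.pow_le_pow_right (by omega) hgap
                rw [pow_add] at hb1
                have hb2 : n / 2 ≤ a n ^ (n - n/2) := by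
                  calc n / 2 ≤ 2 ^ (n/2) := le_of_lt (Nat.lt_two_pow_self (n := n/2))
                    _ ≤ 2 ^ (n - n/2) := Nat.pow_le_pow_right (by omega) (by omega)
                    _ ≤ a n ^ (n - n/2) := Nat.pow_le_pow_left ha2 _
                calc (n/2) * (a n ^ h.eval (n/2))
                    = (a n ^ h.eval (n/2)) * (n/2) := Nat.mul_comm _ _
                  _ ≤ (a n ^ h.eval (n/2)) * (a n ^ (n - n/2)) :=
                      Nat.mul_le_mul_left _ hb2
                  _ ≤ a n ^ h.eval n := hb1
                  _ = b n := rfl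
        have hsplit2 : doldSum b n = (moebius (n/n) : ℤ) * (b n : ℤ) +
            ∑ d ∈ n.divisors.erase n, (moebius (n/d) : ℤ) * (b d : ℤ) := by
          rw [doldSum]
          exact (Finset.add_sum_erase _ _ (Nat.mem_divisors_self n hn0)).symm
        rw [hsplit2, Nat.div_self (by omega), ArithmeticFunction.moebius_apply_one]
        have hterm : ∀ d ∈ n.divisors.erase n,
            -((b d : ℕ) : ℤ) ≤ (moebius (n/d) : ℤ) * (b d : ℤ) := by
          intro d hdm
          have := ArithmeticFunction.abs_moebius_le_one (n := n / d)
          have hmu : -1 ≤ (moebius (n/d) : ℤ) := by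
            rw [abs_le] at this
            exact this.1
          calc -((b d : ℕ) : ℤ) = -1 * (b d : ℤ) := by ring
            _ ≤ (moebius (n/d) : ℤ) * (b d : ℤ) :=
                mul_le_mul_of_nonneg_right hmu (by positivity)
        have hsum_ge : -( (∑ d ∈ n.divisors.erase n, b d : ℕ) : ℤ) ≤
            ∑ d ∈ n.divisors.erase n, (moebius (n/d) : ℤ) * (b d : ℤ) := by
          calc -((∑ d ∈ n.divisors.erase n, b d : ℕ) : ℤ)
              = ∑ d ∈ n.divisors.erase n, -((b d : ℕ) : ℤ) := by
                push_cast
                rw [← Finset.sum_neg_distrib]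
            _ ≤ _ := Finset.sum_le_sum hterm
        have hcst : ((∑ d ∈ n.divisors.erase n, b d : ℕ) : ℤ) ≤ (b n : ℤ) :=
          Int.ofNat_le.mpr hkey
        linarith [hsum_ge, hcst]
  -- full divisibility
  have hdvd : ∀ n : ℕ, 1 ≤ n → (n : ℤ) ∣ doldSum b n := by
    intro n hn
    have hpos := hsign n hn
    set s := (doldSum b n).toNat with hs
    have hsz : doldSum b n = (s : ℤ) := (Int.toNat_of_nonneg hpos).symm
    rw [hsz, Int.natCast_dvd_natCast]
    rw [Nat.dvd_iff_prime_pow_dvd_dvd]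
    intro p j hp hpj
    rcases Nat.eq_zero_or_pos j with rfl | hj1
    · simp
    have hpn : p ∣ n := dvd_trans (dvd_pow_self p (by omega)) hpj
    have hple : j ≤ n.factorization p :=
      (hp.pow_dvd_iff_le_factorization (by omega)).mp hpj
    have := hppdvd n hn p hp hpn
    rw [hsz, Int.natCast_dvd_natCast] at this
    exact dvd_trans (pow_dvd_pow p hple) this
  -- Möbius inversion
  have hsum : ∀ n, 0 < n → ((fun i => (b i : ℤ)) n) = ∑ d ∈ n.divisors, doldSum b d := by
    intro n hn
    have key := (ArithmeticFunction.sum_eq_iff_sum_smul_moebius_eq (R := ℤ)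
      (f := fun i => doldSum b i) (g := fun i => (b i : ℤ))).mpr ?_ n hn
    · exact key.symm
    · intro m hm
      have hanti := Nat.sum_divisorsAntidiagonal'
        (f := fun x y => (moebius x : ℤ) * (b y : ℤ)) (n := m)
      simp only [smul_eq_mul]
      rw [hanti, doldSum]
  set c : ℕ → ℕ := fun d => ((doldSum b d) / (d : ℤ)).toNat with hcdef
  have hfinal : ∀ n, 1 ≤ n → b n = ∑ d ∈ n.divisors, d * c d := by
    intro n hn
    have h1 := hsum n hn
    have h2 : ∀ d ∈ n.divisors, doldSum b d = ((d * c d : ℕ) : ℤ) := by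
      intro d hdm
      have hd1 : 1 ≤ d := Nat.pos_of_mem_divisors hdm
      have hdd := hdvd d hd1
      have hdpos := hsign d hd1
      have htn : ((doldSum b d / (d:ℤ)).toNat : ℤ) = doldSum b d / (d:ℤ) :=
        Int.toNat_of_nonneg (Int.ediv_nonneg hdpos (by positivity))
      push_cast
      rw [hcdef]
      simp only
      rw [htn, Int.mul_ediv_cancel' hdd]
    rw [Finset.sum_congr rfl h2] at h1
    have h3 : ((∑ d ∈ n.divisors, d * c d : ℕ) : ℤ)
        = ∑ d ∈ n.divisors, ((d * c d : ℕ) : ℤ) := by push_cast; ring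
    have h5 := h1.trans h3.symm
    exact Nat.cast_injective h5
  exact realizable_of_counts b c hfinal

theorem realizable_polynomial_powers (a : ℕ → ℕ) (ha : IsRealizable a)
    (h : Polynomial ℕ) :
    IsRealizable (fun n => a n ^ h.eval n) := by
  rcases Nat.eq_zero_or_pos h.natDegree with hd0 | hd1
  · obtain ⟨x, rfl⟩ := Polynomial.natDegree_eq_zero.mp hd0
    simpa [Polynomial.eval_C] using realizable_const_pow ha x
  · by_cases hdivX : h.divX = 0
    · have : h = Polynomial.C (h.coeff 0) := by
        conv_lhs => rw [← Polynomial.X_mul_divX_add h]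
        rw [hdivX]
        simp
      rw [this] at hd1
      simp at hd1
    · have hdeg : 1 ≤ (Polynomial.X * h.divX).natDegree := by
        rw [mul_comm, Polynomial.natDegree_mul_X hdivX]
        omega
      have h1 := realizable_nonconst_pow a ha (Polynomial.X * h.divX) hdeg
      have h2 := realizable_const_pow ha (h.coeff 0)
      have h3 := realizable_mul h1 h2
      have heq : (fun n => a n ^ h.eval n)
          = fun n => a n ^ (Polynomial.X * h.divX).eval n * a n ^ (Polynomial.C (h.coeff 0)).eval n := by
        funext n
        rw [← pow_add, Polynomial.eval_C]
        congr 1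
        conv_lhs => rw [← Polynomial.X_mul_divX_add h]
        rw [Polynomial.eval_add, Polynomial.eval_C]
      rw [heq]
      simpa using h3
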